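/- Suppose A can be partitioned into A' and A ∖ A' with Σ_{a∈A'} s(a) = Σ_{a∉A'} s(a) = (1/2)Σ_{a∈A} s(a). Then placing B* as the horizontal segment from (0,0) to ((1/2)Σ s(a) − 1, 0), the buses {B_a : a ∈ A'} consecutively along the line y = 1, and the buses {B_a : a ∉ A'} consecutively along the line y = −1, with each grid point of each B_a joined to B* by a unit vertical edge through a connector placed at that grid point of B_a, yields a valid realization: all buses are disjoint, all connectors distinct, and every edge is perpendicular to B* and interior-disjoint from all buses and connectors other than its endpoints. -/

import Mathlib

/-- An axis-parallel closed grid segment. `coord` is the fixed coordinate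
(the y-coordinate if horizontal, the x-coordinate if vertical), and the
segment spans from `lo` to `hi` in the other coordinate. -/
structure GridSeg where
  horiz : Bool
  coord : ℤ
  lo : ℤ
  hi : ℤ

/-- The set of grid points covered by a grid segment. -/
def GridSeg.pts (s : GridSeg) : Set (ℤ × ℤ) :=
  if s.horiz then {p | p.2 = s.coord ∧ s.lo ≤ p.1 ∧ p.1 ≤ s.hi}
  else {p | p.1 = s.coord ∧ s.lo ≤ p.2 ∧ p.2 ≤ s.hi}

/-- The foot of the perpendicular from a point to the line of a grid segment. -/
def foot (c : ℤ × ℤ) (s : GridSeg) : ℤ × ℤ :=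
  if s.horiz then (c.1, s.coord) else (s.coord, c.2)

/-- The closed segment from `c` to its perpendicular foot on the line of `s`. -/
def edgePts (c : ℤ × ℤ) (s : GridSeg) : Set (ℤ × ℤ) :=
  if s.horiz then {p | p.1 = c.1 ∧ min c.2 s.coord ≤ p.2 ∧ p.2 ≤ max c.2 s.coord}
  else {p | p.2 = c.2 ∧ min c.1 s.coord ≤ p.1 ∧ p.1 ≤ max c.1 s.coord}

/-- A grid realization of a bus graph: buses are axis-parallel closed grid
segments, connectors are grid points, and each edge is drawn as a straight
segment from the connector, perpendicular to the bus it joins, containing no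
other bus or connector; buses and connectors are pairwise non-intersecting. -/
structure Realization {B C : Type} (adj : C → Finset B) where
  bus : B → GridSeg
  conn : C → ℤ × ℤ
  bus_disjoint : ∀ b b' : B, b ≠ b' → Disjoint (bus b).pts (bus b').pts
  conn_inj : Function.Injective conn
  conn_off_bus : ∀ (c : C) (b : B), conn c ∉ (bus b).pts
  edge_foot : ∀ c : C, ∀ b ∈ adj c, foot (conn c) (bus b) ∈ (bus b).pts
  edge_avoids_bus : ∀ c : C, ∀ b ∈ adj c, ∀ b' : B,
    ∀ p ∈ edgePts (conn c) (bus b), p ∈ (bus b').pts → b' = b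
  edge_avoids_conn : ∀ c : C, ∀ b ∈ adj c, ∀ c' : C,
    conn c' ∈ edgePts (conn c) (bus b) → c' = c

/-- Given an equal-sum partition A' of the PARTITION instance, the explicit
layout — B* as the horizontal segment from (0,0) to (T−1, 0); each B_a for
a ∈ A' horizontal along y = 2 and each B_a for a ∉ A' horizontal along
y = −2, placed consecutively (at pairwise non-overlapping offsets `off`
within [0, T]); and, for each grid point of each B_a, a connector directly
between B_a and B* (at y = 1, resp. y = −1) joined by unit vertical edges to
both — is a valid grid realization. -/
theorem partition_layout_is_realization
    {α : Type} [Fintype α] [DecidableEq α]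
    (s : α → ℕ) (hs : ∀ a, 2 ≤ s a) (T : ℕ)
    (htot : ∑ a, s a = 2 * T)
    (A' : Finset α)
    (hsum : ∑ a ∈ A', s a = T ∧ ∑ a ∈ A'ᶜ, s a = T)
    (off : α → ℕ)
    (hfit : ∀ a, off a + s a ≤ T)
    (hdisj : ∀ a b : α, a ≠ b → (a ∈ A' ↔ b ∈ A') →
      off a + s a ≤ off b ∨ off b + s b ≤ off a) :
    ∃ R : Realization (fun c : (a : α) × Fin (s a) =>
        ({some c.1, none} : Finset (Option α))),
      R.bus none = ⟨true, 0, 0, (T : ℤ) - 1⟩ ∧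
      (∀ a : α, R.bus (some a) =
        ⟨true, if a ∈ A' then 2 else -2, (off a : ℤ),
          (off a : ℤ) + (s a : ℤ) - 1⟩) ∧
      (∀ c : (a : α) × Fin (s a),
        R.conn c = ((off c.1 : ℤ) + (c.2 : ℤ),
          if c.1 ∈ A' then (1 : ℤ) else -1)) := by

  obtain ⟨h1, h2⟩ := hsum
  refine ⟨{
    bus := fun b => match b with
      | none => ⟨true, 0, 0, (T : ℤ) - 1⟩
      | some a => ⟨true, if a ∈ A' then 2 else -2, (off a : ℤ),
          (off a : ℤ) + (s a : ℤ) - 1⟩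
    conn := fun c => ((off c.1 : ℤ) + (c.2 : ℤ), if c.1 ∈ A' then (1 : ℤ) else -1)
    bus_disjoint := ?_
    conn_inj := ?_
    conn_off_bus := ?_
    edge_foot := ?_
    edge_avoids_bus := ?_
    edge_avoids_conn := ?_ }, rfl, fun a => rfl, fun c => rfl⟩
  · -- bus_disjoint
    rintro (_ | a) (_ | b) hne
    · exact absurd rfl hne
    · rw [Set.disjoint_left]
      rintro p hp hp'
      simp only [GridSeg.pts, Set.mem_setOf_eq, if_true] at hp hp'
      split_ifs at hp' <;> omega
    · rw [Set.disjoint_left]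
      rintro p hp hp'
      simp only [GridSeg.pts, Set.mem_setOf_eq, if_true] at hp hp'
      split_ifs at hp <;> omega
    · have hab : a ≠ b := fun h => hne (by rw [h])
      rw [Set.disjoint_left]
      rintro p hp hp'
      simp only [GridSeg.pts, Set.mem_setOf_eq, if_true] at hp hp'
      by_cases ha : a ∈ A' <;> by_cases hb : b ∈ A' <;>
        simp only [ha, hb, if_true, if_false] at hp hp'
      · have := hdisj a b hab (by simp [ha, hb]); omega
      · omega
      · omega
      · have := hdisj a b hab (by simp [ha, hb]); omega
  · -- conn_inj
    rintro ⟨a, i⟩ ⟨b, j⟩ h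
    simp only [Prod.mk.injEq] at h
    obtain ⟨hx, hy⟩ := h
    have hab : a ∈ A' ↔ b ∈ A' := by split_ifs at hy <;> simp_all <;> omega
    have hab' : a = b := by
      by_contra hne
      have := hdisj a b hne hab
      have hi := i.isLt
      have hj := j.isLt
      omega
    subst hab'
    have : i = j := by
      apply Fin.ext
      omega
    rw [this]
  · -- conn_off_bus
    rintro ⟨a, i⟩ (_ | b) <;>
      simp only [GridSeg.pts, Set.mem_setOf_eq, if_true, not_and] <;>
      intro h <;> split_ifs at h ⊢ <;> omega
  · -- edge_foot
    rintro ⟨a, i⟩ b hb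
    simp only [Finset.mem_insert, Finset.mem_singleton] at hb
    have hi := i.isLt
    have hf := hfit a
    rcases hb with rfl | rfl
    · simp only [foot, GridSeg.pts, Set.mem_setOf_eq, if_true]
      refine ⟨by simp, ?_, ?_⟩ <;> push_cast <;> omega
    · simp only [foot, GridSeg.pts, Set.mem_setOf_eq, if_true]
      refine ⟨by simp, ?_, ?_⟩ <;> push_cast <;> omega
  · -- edge_avoids_bus
    rintro ⟨a, i⟩ b hb b' p hp hp'
    simp only [Finset.mem_insert, Finset.mem_singleton] at hb
    have hi := i.isLt
    rcases hb with rfl | rfl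
    · -- edge to B_a
      simp only [edgePts, Set.mem_setOf_eq, if_true] at hp
      match b' with
      | none =>
        exfalso
        simp only [GridSeg.pts, Set.mem_setOf_eq, if_true] at hp'
        split_ifs at hp <;> omega
      | some a' =>
        simp only [GridSeg.pts, Set.mem_setOf_eq, if_true] at hp'
        by_cases ha : a ∈ A' <;> by_cases ha' : a' ∈ A' <;>
          simp only [ha, ha', if_true, if_false] at hp hp' <;>
          [skip; omega; omega; skip] <;>
        · by_cases he : a' = a
          · rw [he]
          · exfalso
            have := hdisj a a' (fun h => he h.symm) (by simp [ha, ha'])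
            omega
    · -- edge to B*
      simp only [edgePts, Set.mem_setOf_eq, if_true] at hp
      match b' with
      | none => rfl
      | some a' =>
        exfalso
        simp only [GridSeg.pts, Set.mem_setOf_eq, if_true] at hp'
        split_ifs at hp hp' <;> omega
  · -- edge_avoids_conn
    rintro ⟨a, i⟩ b hb ⟨a', j⟩ hp
    simp only [Finset.mem_insert, Finset.mem_singleton] at hb
    have hi := i.isLt
    have hj := j.isLt
    have key : ((off a' : ℤ) + (j : ℤ) = (off a : ℤ) + (i : ℤ)) → (a' ∈ A' ↔ a ∈ A') →
        (⟨a', j⟩ : (a : α) × Fin (s a)) = ⟨a, i⟩ := by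
      intro hx hmem
      have he : a' = a := by
        by_contra hne
        have := hdisj a' a hne hmem
        omega
      subst he
      have : j = i := by apply Fin.ext; omega
      rw [this]
    rcases hb with rfl | rfl
    · simp only [edgePts, Set.mem_setOf_eq, if_true] at hp
      by_cases ha : a ∈ A' <;> by_cases ha' : a' ∈ A' <;>
        simp only [ha, ha', if_true, if_false] at hp <;>
        [skip; omega; omega; skip] <;>
        exact key hp.1 (by simp [ha, ha'])
    · simp only [edgePts, Set.mem_setOf_eq, if_true] at hp
      by_cases ha : a ∈ A' <;> by_cases ha' : a' ∈ A' <;>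
        simp only [ha, ha', if_true, if_false] at hp <;>
        [skip; omega; omega; skip] <;>
        exact key hp.1 (by simp [ha, ha'])
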